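/- arXiv:0801.2493 — 4 statements merged into one kernel-verified Lean document; each statement's English description precedes it below -/
import Mathlib

section
/- Let N ≥ 1, B ∈ GL(2, ℤ/Nℤ), g : (ℤ/Nℤ)² → ℝ, (Uψ)(Q) = exp(2πi·g(Q))·ψ(BQ). If ψ is an eigenvector of U with eigenvalue λ, and ξ ∈ (ℤ/Nℤ)² satisfies ψ(ξ) ≠ 0, then λ^{T} = exp(2πi·Σ_{Q ∈ [ξ]} g(Q)), where [ξ] = {B^k ξ : k ∈ ℤ} is the orbit of ξ under B and T is the cardinality of [ξ]. -/
open scoped BigOperators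

/-- `e x = exp(2πi x)` -/
noncomputable def e (x : ℝ) : ℂ := Complex.exp (2 * Real.pi * Complex.I * x)

lemma e_add (x y : ℝ) : e (x + y) = e x * e y := by
  simp only [e, Complex.ofReal_add, mul_add, Complex.exp_add]

/-- if `ψ` is an eigenvector of `(Uψ)(Q) = exp(2πi g(Q)) ψ(BQ)` with eigenvalue
`λ` and `ψ(ξ) ≠ 0`, then `λ^T = exp(2πi Σ_{Q ∈ [ξ]} g(Q))` where `[ξ]` is the `B`-orbit of `ξ`
and `T` its cardinality. -/
theorem stmt2 (N : ℕ) [NeZero N] (hN : 1 ≤ N)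
    (B : Matrix (Fin 2) (Fin 2) (ZMod N)) (hB : IsUnit B.det)
    (g : (Fin 2 → ZMod N) → ℝ)
    (ψ : (Fin 2 → ZMod N) → ℂ) (lam : ℂ)
    (hψ : ψ ≠ 0)
    (heig : ∀ Q, e (g Q) * ψ (B.mulVec Q) = lam * ψ Q)
    (ξ : Fin 2 → ZMod N) (hξ : ψ ξ ≠ 0)
    (orb : Set (Fin 2 → ZMod N))
    (horb : orb = {Q | ∃ k : ℕ, Q = (B ^ k).mulVec ξ}) :
    lam ^ orb.ncard = e (∑ Q ∈ orb.toFinite.toFinset, g Q) := by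
  set f : ℕ → (Fin 2 → ZMod N) := fun k => (B ^ k).mulVec ξ with hf
  have hf0 : f 0 = ξ := by simp only [hf, pow_zero, Matrix.one_mulVec]
  have hfsucc : ∀ k, f (k + 1) = B.mulVec (f k) := by
    intro k
    simp only [hf, pow_succ', Matrix.mulVec_mulVec]
  -- injectivity of B.mulVec
  have hBinj : Function.Injective (B.mulVec) := by
    intro x y h
    have h2 := congrArg (B⁻¹.mulVec) h
    simpa only [Matrix.mulVec_mulVec, Matrix.nonsing_inv_mul B hB, Matrix.one_mulVec] using h2
  -- cancellation: f (i+1) = f (j+1) → f i = f j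
  have hcancel : ∀ i j : ℕ, f (i + 1) = f (j + 1) → f i = f j := by
    intro i j h
    apply hBinj
    rw [← hfsucc, ← hfsucc, h]
  -- key cancellation
  have hkey : ∀ a b : ℕ, a < b → f a = f b → f (b - a) = ξ := by
    intro a b hlt hab
    have key : ∀ m, f (m + (b - a)) = f m → f (b - a) = f 0 := by
      intro m
      induction m with
      | zero => intro h; simpa using h
      | succ m ih =>
        intro h
        apply ih
        apply hcancel
        have : m + 1 + (b - a) = m + (b - a) + 1 := by omega
        rw [← this]; exact h
    have h1 : f (a + (b - a)) = f a := by
      have : a + (b - a) = b := by omega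
      rw [this]; exact hab.symm
    rw [← hf0]; exact key a h1
  -- exists repeat
  have hrep : ∃ n, 0 < n ∧ f n = ξ := by
    obtain ⟨i, j, hij, hfij⟩ := Finite.exists_ne_map_eq_of_infinite f
    rcases Nat.lt_or_ge i j with h | h
    · exact ⟨j - i, by omega, hkey i j h hfij⟩
    · have h' : j < i := by omega
      exact ⟨i - j, by omega, hkey j i h' hfij.symm⟩
  classical
  set T := Nat.find hrep with hT
  obtain ⟨hTpos, hfT⟩ : 0 < T ∧ f T = ξ := Nat.find_spec hrep
  -- periodicity: f (k + T) = f k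
  have hper : ∀ k, f (k + T) = f k := by
    intro k
    induction k with
    | zero => simpa [hf0] using hfT
    | succ k ih =>
      have : k + 1 + T = (k + T) + 1 := by omega
      rw [this, hfsucc, hfsucc, ih]
  -- injectivity on range T
  have hinjT : Set.InjOn f (Finset.range T : Finset ℕ) := by
    intro a ha b hb hab
    simp only [Finset.coe_range, Set.mem_Iio] at ha hb
    by_contra hne
    rcases Nat.lt_or_ge a b with h | h
    · have := Nat.find_le (h := hrep) ⟨by omega, hkey a b h hab⟩
      omega
    · have h' : b < a := by omega
      have := Nat.find_le (h := hrep) ⟨by omega, hkey b a h' hab.symm⟩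
      omega
  -- orbit = image of range T
  have horbeq : orb = f '' (Finset.range T : Finset ℕ) := by
    rw [horb]
    ext Q
    simp only [Set.mem_setOf_eq, Finset.coe_range, Set.mem_image, Set.mem_Iio]
    constructor
    · rintro ⟨k, rfl⟩
      refine ⟨k % T, Nat.mod_lt _ hTpos, ?_⟩
      -- f (k % T) = f k by periodicity
      have : ∀ q r, f (r + q * T) = f r := by
        intro q
        induction q with
        | zero => simp
        | succ q ih =>
          intro r
          have : r + (q + 1) * T = (r + q * T) + T := by ring
          rw [this, hper, ih]
      have hk : k % T + (k / T) * T = k := Nat.mod_add_div' k T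
      calc f (k % T) = f (k % T + (k / T) * T) := (this _ _).symm
        _ = f k := by rw [hk]
    · rintro ⟨k, _, rfl⟩
      exact ⟨k, rfl⟩
  -- ncard
  have hcard : orb.ncard = T := by
    rw [horbeq, Set.ncard_image_of_injOn hinjT, Set.ncard_coe_finset,
      Finset.card_range]
  -- sum over orbit = sum over range T
  have hsum : ∑ Q ∈ orb.toFinite.toFinset, g Q = ∑ k ∈ Finset.range T, g (f k) := by
    have himg : orb.toFinite.toFinset = (Finset.range T).image f := by
      ext Q
      simp only [Set.Finite.mem_toFinset, Finset.mem_image, Finset.mem_range]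
      rw [horbeq]
      simp
    rw [himg, Finset.sum_image
      (fun a ha b hb h => hinjT (by simpa using ha) (by simpa using hb) h)]
  -- main induction
  have main : ∀ n, lam ^ n * ψ ξ = e (∑ k ∈ Finset.range n, g (f k)) * ψ (f n) := by
    intro n
    induction n with
    | zero => simp [hf0, e]
    | succ n ih =>
      rw [Finset.sum_range_succ, e_add, pow_succ]
      calc lam ^ n * lam * ψ ξ = lam * (lam ^ n * ψ ξ) := by ring
        _ = lam * (e (∑ k ∈ Finset.range n, g (f k)) * ψ (f n)) := by rw [ih]
        _ = e (∑ k ∈ Finset.range n, g (f k)) * (lam * ψ (f n)) := by ring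
        _ = e (∑ k ∈ Finset.range n, g (f k)) * (e (g (f n)) * ψ (B.mulVec (f n))) := by
            rw [heig (f n)]
        _ = e (∑ k ∈ Finset.range n, g (f k)) * e (g (f n)) * ψ (f (n + 1)) := by
            rw [hfsucc]; ring
  have := main T
  rw [hfT] at this
  rw [hcard, hsum]
  exact mul_right_cancel₀ hξ (by linear_combination this)
end

section
/- Let N ≥ 1, B ∈ GL(2, ℤ/Nℤ), g : (ℤ/Nℤ)² → ℝ, and (Uψ)(Q) = exp(2πi·g(Q))·ψ(BQ). Fix ξ ∈ (ℤ/Nℤ)² with orbit [ξ] of size T, and fix an integer j with 1 ≤ j ≤ T. Set λ = exp(2πi·((1/T)·Σ_{n=1}^{T} g(B^n ξ) + j/T)). Define ψ supported on [ξ] by ψ(B^k ξ) = λ^k · exp(−2πi·Σ_{m=0}^{k−1} g(B^m ξ)) for 0 ≤ k < T and ψ(Q) = 0 for Q ∉ [ξ]. Then ψ is well-defined, nonzero, and satisfies Uψ = λψ. -/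
open scoped BigOperators

lemma e_zero : e 0 = 1 := by simp [e]

lemma e_pow (x : ℝ) (k : ℕ) : e x ^ k = e (k * x) := by
  simp only [e, ← Complex.exp_nat_mul]
  congr 1
  push_cast
  ring

lemma e_nat (n : ℕ) : e n = 1 := by
  simp only [e]
  rw [show ((2:ℂ) * Real.pi * Complex.I * (n:ℝ)) = n * (2 * Real.pi * Complex.I) by
    push_cast; ring]
  exact Complex.exp_nat_mul_two_pi_mul_I n

/-- for each `B`-orbit `[ξ]` of size `T` and each `1 ≤ j ≤ T`, with
`λ = exp(2πi((1/T) Σ_{n=1}^T g(B^n ξ) + j/T))`, there is a well-defined nonzero function `ψ`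
supported on `[ξ]`, given on the orbit by `ψ(B^k ξ) = λ^k exp(-2πi Σ_{m<k} g(B^m ξ))`,
which is an eigenvector of `U` with eigenvalue `λ`. -/
theorem stmt3 (N : ℕ) [NeZero N] (hN : 1 ≤ N)
    (B : Matrix (Fin 2) (Fin 2) (ZMod N)) (hB : IsUnit B.det)
    (g : (Fin 2 → ZMod N) → ℝ)
    (ξ : Fin 2 → ZMod N)
    (T : ℕ) (hT : T = Set.ncard {Q | ∃ k : ℕ, Q = (B ^ k).mulVec ξ})
    (j : ℕ) (hj1 : 1 ≤ j) (hjT : j ≤ T)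
    (lam : ℂ)
    (hlam : lam = e ((T : ℝ)⁻¹ * ∑ n ∈ Finset.Icc 1 T, g ((B ^ n).mulVec ξ) + (j : ℝ) / T)) :
    ∃ ψ : (Fin 2 → ZMod N) → ℂ,
      ψ ≠ 0 ∧
      (∀ Q, (¬ ∃ k : ℕ, Q = (B ^ k).mulVec ξ) → ψ Q = 0) ∧
      (∀ k, k < T →
        ψ ((B ^ k).mulVec ξ) =
          lam ^ k * e (-(∑ m ∈ Finset.range k, g ((B ^ m).mulVec ξ)))) ∧
      (∀ Q, e (g Q) * ψ (B.mulVec Q) = lam * ψ Q) := by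
  set f : (Fin 2 → ZMod N) → (Fin 2 → ZMod N) := B.mulVec with hf
  -- injectivity of f
  have hfi : Function.Injective f := by
    intro u v h
    have h2 := congrArg (B⁻¹.mulVec) h
    simpa only [hf, Matrix.mulVec_mulVec, Matrix.nonsing_inv_mul B hB,
      Matrix.one_mulVec] using h2
  -- powers of B act as iterates of f
  have hpowf : ∀ k, (B ^ k).mulVec ξ = f^[k] ξ := by
    intro k
    induction k with
    | zero => simp [Matrix.one_mulVec]
    | succ k ih =>
        rw [Function.iterate_succ_apply', ← ih, pow_succ', ← Matrix.mulVec_mulVec]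
  -- existence of a period
  have hex : ∃ q : ℕ, 0 < q ∧ f^[q] ξ = ξ := by
    obtain ⟨a, b, hne, hab⟩ := Finite.exists_ne_map_eq_of_infinite (fun k : ℕ => f^[k] ξ)
    have key : ∀ a b : ℕ, a < b → f^[a] ξ = f^[b] ξ → ∃ q : ℕ, 0 < q ∧ f^[q] ξ = ξ := by
      intro a b hlt he
      refine ⟨b - a, Nat.sub_pos_of_lt hlt, ?_⟩
      have : f^[a] (f^[b-a] ξ) = f^[a] ξ := by
        rw [← Function.iterate_add_apply, Nat.add_sub_cancel' hlt.le]
        exact he.symm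
      exact hfi.iterate a this
    rcases Nat.lt_trichotomy a b with h | h | h
    · exact key a b h hab
    · exact absurd h hne
    · exact key b a h hab.symm
  classical
  set p := Nat.find hex with hpdef
  obtain ⟨hp0, hfix⟩ : 0 < p ∧ f^[p] ξ = ξ := Nat.find_spec hex
  have hmin : ∀ q, 0 < q → q < p → f^[q] ξ ≠ ξ := by
    intro q hq hqp hfq
    exact Nat.find_min hex hqp ⟨hq, hfq⟩
  -- injectivity of k ↦ f^[k] ξ on [0, p)
  have huniq : ∀ a b, a < p → b < p → f^[a] ξ = f^[b] ξ → a = b := by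
    have key : ∀ a b, a < b → b < p → f^[a] ξ ≠ f^[b] ξ := by
      intro a b hlt hbp he
      have : f^[a] (f^[b-a] ξ) = f^[a] ξ := by
        rw [← Function.iterate_add_apply, Nat.add_sub_cancel' hlt.le]
        exact he.symm
      exact hmin (b - a) (Nat.sub_pos_of_lt hlt) (lt_of_le_of_lt (Nat.sub_le b a) hbp)
        (hfi.iterate a this)
    intro a b ha hb he
    rcases Nat.lt_trichotomy a b with h | h | h
    · exact absurd he (key a b h hb)
    · exact h
    · exact absurd he.symm (key b a h ha)
  -- reduction of iterates mod p
  have hmod : ∀ k, f^[k] ξ = f^[k % p] ξ := by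
    intro k
    conv_lhs => rw [← Nat.mod_add_div k p]
    rw [Function.iterate_add_apply]
    congr 1
    induction (k / p) with
    | zero => simp
    | succ q ih => rw [Nat.mul_succ, Function.iterate_add_apply, hfix, ih]
  -- the orbit set is the image of range p
  have hS : {Q | ∃ k : ℕ, Q = (B ^ k).mulVec ξ}
      = ↑((Finset.range p).image (fun k => f^[k] ξ)) := by
    ext Q
    simp only [Set.mem_setOf_eq, Finset.coe_image, Set.mem_image, Finset.mem_coe,
      Finset.mem_range]
    constructor
    · rintro ⟨k, rfl⟩
      exact ⟨k % p, Nat.mod_lt _ hp0, by rw [← hmod, hpowf]⟩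
    · rintro ⟨k, hk, rfl⟩
      exact ⟨k, (hpowf k).symm⟩
  have hTp : T = p := by
    rw [hT, hS, Set.ncard_coe_finset, Finset.card_image_of_injOn, Finset.card_range]
    intro a ha b hb he
    exact huniq a b (Finset.mem_range.mp ha) (Finset.mem_range.mp hb) he
  subst hTp
  -- the eigenfunction
  set F : ℕ → ℂ := fun k => lam ^ k * e (-(∑ m ∈ Finset.range k, g (f^[m] ξ))) with hF
  set ψ : (Fin 2 → ZMod N) → ℂ :=
    fun Q => if h : ∃ k, k < p ∧ f^[k] ξ = Q then F (Nat.find h) else 0 with hψ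
  have hψval : ∀ k, k < p → ψ (f^[k] ξ) = F k := by
    intro k hk
    have h : ∃ k', k' < p ∧ f^[k'] ξ = f^[k] ξ := ⟨k, hk, rfl⟩
    rw [show ψ (f^[k] ξ) = F (Nat.find h) from dif_pos h]
    obtain ⟨hlt, heq⟩ := Nat.find_spec h
    rw [huniq _ _ hlt hk heq]
  have hψone : ψ ξ = 1 := by
    have := hψval 0 hp0
    simpa [hF, e_zero] using this
  have hψzero : ∀ Q, (¬ ∃ k : ℕ, Q = (B ^ k).mulVec ξ) → ψ Q = 0 := by
    intro Q hQ
    refine dif_neg ?_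
    rintro ⟨k, hk, rfl⟩
    exact hQ ⟨k, (hpowf k).symm⟩
  -- lam^p
  have hTne : (p : ℝ) ≠ 0 := Nat.cast_ne_zero.mpr hp0.ne'
  have hlamT : lam ^ p = e (∑ m ∈ Finset.range p, g (f^[m] ξ)) := by
    rw [hlam, e_pow]
    have harg : (p : ℝ) * ((p : ℝ)⁻¹ * ∑ n ∈ Finset.Icc 1 p, g ((B ^ n).mulVec ξ) + (j : ℝ) / p)
        = (∑ n ∈ Finset.Icc 1 p, g ((B ^ n).mulVec ξ)) + (j : ℝ) := by
      field_simp
    rw [harg, e_add, e_nat, mul_one]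
    congr 1
    -- shift of summation index using periodicity
    have h1 : Finset.Icc 1 p = Finset.Ico 1 (p + 1) := by
      rw [Finset.Ico_add_one_right_eq_Icc]
    rw [h1, Finset.sum_Ico_succ_top hp0]
    · rw [Finset.range_eq_Ico, Finset.sum_eq_sum_Ico_succ_bot hp0]
      simp only [hpowf, hfix, Function.iterate_zero_apply]
      ring
  -- closure of the complement of the orbit under f
  have hclosed : ∀ Q, (¬ ∃ k : ℕ, Q = (B ^ k).mulVec ξ) → ¬ ∃ k : ℕ, f Q = (B ^ k).mulVec ξ := by
    intro Q hQ ⟨k, hk⟩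
    apply hQ
    rw [hpowf] at hk
    rcases Nat.eq_zero_or_pos (k % p) with h0 | hpos
    · have : f Q = f (f^[p - 1] ξ) := by
        rw [← Function.iterate_succ_apply' f (p - 1) ξ, Nat.succ_eq_add_one,
          Nat.sub_add_cancel hp0, hfix, hk, hmod, h0]
        simp
      exact ⟨p - 1, by rw [hpowf]; exact hfi this⟩
    · have hk' : f Q = f (f^[k % p - 1] ξ) := by
        rw [← Function.iterate_succ_apply' f (k % p - 1) ξ, Nat.succ_eq_add_one,
          Nat.sub_add_cancel hpos, hk, hmod]
      exact ⟨k % p - 1, by rw [hpowf]; exact hfi hk'⟩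
  refine ⟨ψ, ?_, hψzero, ?_, ?_⟩
  · intro h
    have : ψ ξ = 0 := by rw [h]; rfl
    rw [hψone] at this
    exact one_ne_zero this
  · intro k hk
    rw [hpowf, hψval k hk, hF]
    simp only [hpowf]
  · intro Q
    by_cases hQ : ∃ k : ℕ, Q = (B ^ k).mulVec ξ
    · -- Q is on the orbit
      obtain ⟨k, rfl⟩ := hQ
      rw [hpowf, hmod]
      set r := k % p with hr
      have hrT : r < p := Nat.mod_lt _ hp0
      have hBv : f (f^[r] ξ) = f^[r+1] ξ := (Function.iterate_succ_apply' f r ξ).symm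
      rw [hBv, hψval r hrT, hF]
      rcases Nat.lt_or_ge (r + 1) p with hlt | hge
      · rw [hψval (r+1) hlt, hF]
        simp only
        rw [Finset.sum_range_succ, pow_succ]
        have h2 : e (g (f^[r] ξ)) * e (-(∑ m ∈ Finset.range r, g (f^[m] ξ) + g (f^[r] ξ)))
            = e (-(∑ m ∈ Finset.range r, g (f^[m] ξ))) := by
          rw [← e_add]; congr 1; ring
        rw [← h2]; ring
      · -- r + 1 = p
        have hrT1 : r + 1 = p := le_antisymm hrT hge
        have : f^[r+1] ξ = ξ := by rw [hrT1, hfix]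
        rw [this, hψone, mul_one]
        have hgoal : lam * (lam ^ r * e (-(∑ m ∈ Finset.range r, g (f^[m] ξ))))
            = lam ^ p * e (-(∑ m ∈ Finset.range r, g (f^[m] ξ))) := by
          rw [← hrT1, pow_succ]; ring
        rw [hgoal, hlamT, ← hrT1, Finset.sum_range_succ, ← e_add]
        congr 1
        ring
    · -- Q off the orbit
      rw [hψzero Q hQ, hψzero _ (by simpa [hf] using hclosed Q hQ), mul_zero, mul_zero]
end

section
/- Let g : 𝕋² → ℝ be a function such that for every n ≥ 1, every nonzero y ∈ ℤⁿ, every tuple of distinct rational points x₁,…,xₙ ∈ ℚ²/ℤ², and every z ∈ ℚ, one has Σ_j y_j·g(x_j) ≠ z. Let N ≥ 1, B ∈ GL(2, ℤ/Nℤ). Define eigenvalues λ_{ξ,j} = exp(2πi·((N/T_ξ)·Σ_{n=1}^{T_ξ} g(B^n ξ / N) + j/T_ξ)) for B-orbit representatives ξ ∈ (ℤ/Nℤ)² and 1 ≤ j ≤ T_ξ, where B^n ξ / N denotes the rational point of 𝕋² obtained from a lift of B^n ξ divided by N. Then λ_{ξ,j} = λ_{η,k} implies that ξ and η lie in the same B-orbit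 and j = k. -/
open scoped BigOperators

set_option linter.unusedSectionVars false
set_option maxHeartbeats 1000000

lemma e_eq_imp {a b : ℝ} (h : e a = e b) : ∃ z : ℤ, a - b = z := by
  rw [e, e, Complex.exp_eq_exp_iff_exists_int] at h
  obtain ⟨n, hn⟩ := h
  refine ⟨n, ?_⟩
  have h2 : (2 * (Real.pi : ℂ) * Complex.I) ≠ 0 :=
    mul_ne_zero (mul_ne_zero two_ne_zero (by exact_mod_cast Real.pi_ne_zero)) Complex.I_ne_zero
  have h3 : (2 * (Real.pi : ℂ) * Complex.I) * a = (2 * (Real.pi : ℂ) * Complex.I) * (b + n) := by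
    rw [hn]; ring
  have h4 := mul_left_cancel₀ h2 h3
  have h5 : (a : ℂ) - b = n := by rw [h4]; ring
  exact_mod_cast h5

section Aux
variable {N : ℕ} [NeZero N] {B : Matrix (Fin 2) (Fin 2) (ZMod N)}

lemma exists_pow_one (hB : IsUnit B.det) : ∃ d, 0 < d ∧ B ^ d = 1 := by
  obtain ⟨u, hu⟩ := (Matrix.isUnit_iff_isUnit_det B).mpr hB
  refine ⟨orderOf u, orderOf_pos u, ?_⟩
  have h1 : u ^ orderOf u = 1 := pow_orderOf_eq_one u
  have h2 : (u : Matrix (Fin 2) (Fin 2) (ZMod N)) ^ orderOf u = 1 := by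
    rw [← Units.val_pow_eq_pow_val, h1, Units.val_one]
  rwa [hu] at h2

variable {d : ℕ} (hd : 0 < d) (hBd : B ^ d = 1)
include hd hBd

lemma cancel_pow {a : ℕ} {x y : Fin 2 → ZMod N}
    (h : (B ^ a).mulVec x = (B ^ a).mulVec y) : x = y := by
  have key : B ^ (a * (d - 1)) * B ^ a = 1 := by
    rw [← pow_add]
    have h1 : a * (d - 1) + a = a * d := by
      obtain ⟨d', rfl⟩ : ∃ d', d = d' + 1 := ⟨d - 1, by omega⟩
      rw [Nat.add_sub_cancel, Nat.mul_succ]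
    rw [h1, pow_mul', hBd, one_pow]
  calc x = ((B ^ (a * (d - 1)) * B ^ a)).mulVec x := by rw [key, Matrix.one_mulVec]
    _ = (B ^ (a * (d - 1))).mulVec ((B ^ a).mulVec x) := by rw [Matrix.mulVec_mulVec]
    _ = (B ^ (a * (d - 1))).mulVec ((B ^ a).mulVec y) := by rw [h]
    _ = ((B ^ (a * (d - 1)) * B ^ a)).mulVec y := by rw [Matrix.mulVec_mulVec]
    _ = y := by rw [key, Matrix.one_mulVec]

lemma orbit_sub {ξ η : Fin 2 → ZMod N} {n m : ℕ}
    (h : (B ^ n).mulVec ξ = (B ^ m).mulVec η) :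
    {Q | ∃ a : ℕ, Q = (B ^ a).mulVec ξ} ⊆ {Q | ∃ a : ℕ, Q = (B ^ a).mulVec η} := by
  rintro Q ⟨a, rfl⟩
  have h1 : a + n * d - n + n = a + n * d := by
    have : n ≤ n * d := Nat.le_mul_of_pos_right n hd
    omega
  refine ⟨a + n * d - n + m, ?_⟩
  have h2 : (B ^ (a + n * d)).mulVec ξ = (B ^ a).mulVec ξ := by
    rw [pow_add, pow_mul', hBd, one_pow, mul_one]
  calc (B ^ a).mulVec ξ = (B ^ (a + n * d)).mulVec ξ := h2.symm
    _ = (B ^ (a + n * d - n)).mulVec ((B ^ n).mulVec ξ) := by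
        rw [Matrix.mulVec_mulVec, ← pow_add, h1]
    _ = (B ^ (a + n * d - n)).mulVec ((B ^ m).mulVec η) := by rw [h]
    _ = (B ^ (a + n * d - n + m)).mulVec η := by rw [Matrix.mulVec_mulVec, ← pow_add]

lemma orbit_eq_of_meet {ξ η : Fin 2 → ZMod N} {n m : ℕ}
    (h : (B ^ n).mulVec ξ = (B ^ m).mulVec η) :
    {Q | ∃ a : ℕ, Q = (B ^ a).mulVec ξ} = {Q | ∃ a : ℕ, Q = (B ^ a).mulVec η} :=
  le_antisymm (orbit_sub hd hBd h) (orbit_sub hd hBd h.symm)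

lemma orbit_stuff (ξ : Fin 2 → ZMod N) :
    ∃ t, 0 < t ∧ (B ^ t).mulVec ξ = ξ ∧
      Set.ncard {Q | ∃ a : ℕ, Q = (B ^ a).mulVec ξ} = t ∧
      ∀ a b, 1 ≤ a → a ≤ t → 1 ≤ b → b ≤ t →
        (B ^ a).mulVec ξ = (B ^ b).mulVec ξ → a = b := by
  have hex : ∃ t, 0 < t ∧ (B ^ t).mulVec ξ = ξ :=
    ⟨d, hd, by rw [hBd, Matrix.one_mulVec]⟩
  classical
  obtain ⟨t, ⟨ht0, htξ⟩, hmin'⟩ :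
      ∃ t, (0 < t ∧ (B ^ t).mulVec ξ = ξ) ∧
        ∀ s, s < t → ¬(0 < s ∧ (B ^ s).mulVec ξ = ξ) :=
    ⟨Nat.find hex, Nat.find_spec hex, fun s hs => Nat.find_min hex hs⟩
  have hmin : ∀ s, 0 < s → s < t → (B ^ s).mulVec ξ ≠ ξ := by
    intro s hs1 hs2 hc
    exact (hmin' s hs2) ⟨hs1, hc⟩
  have hper : ∀ n, (B ^ (n + t)).mulVec ξ = (B ^ n).mulVec ξ := by
    intro n
    rw [pow_add, ← Matrix.mulVec_mulVec, htξ]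
  have hmod : ∀ n, (B ^ n).mulVec ξ = (B ^ (n % t)).mulVec ξ := by
    intro n
    induction n using Nat.strong_induction_on with
    | _ n ih =>
      by_cases h : n < t
      · rw [Nat.mod_eq_of_lt h]
      · push_neg at h
        have h1 : n = (n - t) + t := by omega
        rw [h1, hper, ih (n - t) (by omega)]
        rw [Nat.add_mod_right]
  have hinj : ∀ a b, a < t → b < t → (B ^ a).mulVec ξ = (B ^ b).mulVec ξ → a = b := by
    intro a b ha hb hab
    by_contra hne
    wlog hlt : a < b generalizing a b
    · exact this b a hb ha hab.symm (Ne.symm hne) (by omega)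
    have h1 : (B ^ a).mulVec ((B ^ (b - a)).mulVec ξ) = (B ^ a).mulVec ξ := by
      rw [Matrix.mulVec_mulVec, ← pow_add, show a + (b - a) = b by omega]
      exact hab.symm
    have h2 := cancel_pow hd hBd h1
    exact hmin (b - a) (by omega) (by omega) h2
  refine ⟨t, ht0, htξ, ?_, ?_⟩
  · have hset : {Q | ∃ a : ℕ, Q = (B ^ a).mulVec ξ} =
        ↑((Finset.range t).image (fun a => (B ^ a).mulVec ξ)) := by
      ext Q
      simp only [Set.mem_setOf_eq, Finset.coe_image, Set.mem_image, Finset.mem_coe,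
        Finset.mem_range]
      constructor
      · rintro ⟨a, rfl⟩
        exact ⟨a % t, Nat.mod_lt _ ht0, (hmod a).symm⟩
      · rintro ⟨a, _, rfl⟩
        exact ⟨a, rfl⟩
    rw [hset, Set.ncard_coe_finset, Finset.card_image_of_injOn, Finset.card_range]
    intro a ha b hb hab
    exact hinj a b (Finset.mem_range.mp ha) (Finset.mem_range.mp hb) hab
  · intro a b ha1 hat hb1 hbt hab
    rcases eq_or_lt_of_le hat with rfl | hat'
    · rcases eq_or_lt_of_le hbt with h | hbt'
      · omega
      · exfalso
        have : (B ^ b).mulVec ξ = ξ := by rw [← hab, htξ]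
        exact hmin b hb1 hbt' this
    · rcases eq_or_lt_of_le hbt with rfl | hbt'
      · exfalso
        have : (B ^ a).mulVec ξ = ξ := by rw [hab, htξ]
        exact hmin a ha1 hat' this
      · exact hinj a b hat' hbt' hab

end Aux

lemma sum_Icc_one (t : ℕ) (f : ℕ → ℝ) :
    ∑ n ∈ Finset.Icc 1 t, f n = ∑ i ∈ Finset.range t, f (i + 1) := by
  rw [← Finset.Ico_add_one_right_eq_Icc, Finset.sum_Ico_eq_sum_range]
  simp [Nat.add_comm]

lemma sum_shift (t : ℕ) (f : ℕ → ℝ) (hf : ∀ n, f (n + t) = f n) (s : ℕ) :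
    ∑ i ∈ Finset.range t, f (i + s) = ∑ i ∈ Finset.range t, f i := by
  induction s with
  | zero => simp
  | succ s ih =>
    have key : ∑ i ∈ Finset.range t, f (i + 1 + s) = ∑ i ∈ Finset.range t, f (i + s) := by
      have h1 := Finset.sum_range_succ (fun i => f (i + s)) t
      have h2 := Finset.sum_range_succ' (fun i => f (i + s)) t
      have h3 : f (t + s) = f (0 + s) := by rw [show t + s = 0 + s + t by omega, hf]
      rw [h1] at h2
      simp only [h3] at h2
      exact (add_right_cancel h2.symm)
    calc ∑ i ∈ Finset.range t, f (i + (s + 1)) = ∑ i ∈ Finset.range t, f (i + 1 + s) := by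
          apply Finset.sum_congr rfl; intro i _; congr 1; omega
      _ = ∑ i ∈ Finset.range t, f (i + s) := key
      _ = ∑ i ∈ Finset.range t, f i := ih

lemma point_inj {N : ℕ} [NeZero N] (v w : Fin 2 → ZMod N)
    (h : ∀ l, ∃ kk : ℤ, ((v l).val : ℝ) / N - ((w l).val : ℝ) / N = (kk : ℝ)) :
    v = w := by
  have hN0 : (0 : ℝ) < N := by
    have := Nat.pos_of_ne_zero (NeZero.ne N)
    exact_mod_cast this
  funext l
  obtain ⟨kk, hkk⟩ := h l
  have hv : (v l).val < N := ZMod.val_lt _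
  have hw : (w l).val < N := ZMod.val_lt _
  have hb1 : ((v l).val : ℝ) / N - ((w l).val : ℝ) / N < 1 := by
    have h1 : ((v l).val : ℝ) / N < 1 := by
      rw [div_lt_one hN0]; exact_mod_cast hv
    have h2 : (0 : ℝ) ≤ ((w l).val : ℝ) / N := by positivity
    linarith
  have hb2 : (-1 : ℝ) < ((v l).val : ℝ) / N - ((w l).val : ℝ) / N := by
    have h1 : ((w l).val : ℝ) / N < 1 := by
      rw [div_lt_one hN0]; exact_mod_cast hw
    have h2 : (0 : ℝ) ≤ ((v l).val : ℝ) / N := by positivity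
    linarith
  have hk0 : kk = 0 := by
    have hlt : (kk : ℝ) < 1 := by rw [← hkk]; exact hb1
    have hgt : (-1 : ℝ) < kk := by rw [← hkk]; exact hb2
    have hlt' : kk < 1 := by exact_mod_cast hlt
    have hgt' : -1 < kk := by exact_mod_cast hgt
    omega
  rw [hk0] at hkk
  have : ((v l).val : ℝ) / N = ((w l).val : ℝ) / N := by push_cast at hkk; linarith
  have hNne : (N : ℝ) ≠ 0 := ne_of_gt hN0
  have hval : ((v l).val : ℝ) = ((w l).val : ℝ) := by
    calc ((v l).val : ℝ) = ((v l).val : ℝ) / N * N := by rw [div_mul_cancel₀ _ hNne]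
      _ = ((w l).val : ℝ) / N * N := by rw [this]
      _ = ((w l).val : ℝ) := by rw [div_mul_cancel₀ _ hNne]
  have : (v l).val = (w l).val := by exact_mod_cast hval
  exact ZMod.val_injective N this

/-- if `g : 𝕋² → ℝ` takes no rational value on nontrivial integer combinations
of distinct rational points, then the eigenvalues
`λ_{ξ,j} = exp(2πi((N/T_ξ) Σ_{n=1}^{T_ξ} g(B^n ξ / N) + j/T_ξ))` satisfy:
`λ_{ξ,j} = λ_{η,k}` implies `[ξ] = [η]` and `j = k`. -/
theorem stmt9 (g : (Fin 2 → ℝ) → ℝ)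
    (hper : ∀ v m : Fin 2 → ℝ, (∀ i, ∃ k : ℤ, m i = (k : ℝ)) → g (v + m) = g v)
    (hg : ∀ n : ℕ, 1 ≤ n → ∀ y : Fin n → ℤ, y ≠ 0 →
      ∀ x : Fin n → (Fin 2 → ℝ), (∀ i l, ∃ q : ℚ, x i l = (q : ℝ)) →
        (∀ i j, i ≠ j → ¬ ∀ l, ∃ k : ℤ, x i l - x j l = (k : ℝ)) →
      ∀ z : ℚ, ∑ i, (y i : ℝ) * g (x i) ≠ (z : ℝ))
    (N : ℕ) [NeZero N] (hN : 1 ≤ N)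
    (B : Matrix (Fin 2) (Fin 2) (ZMod N)) (hB : IsUnit B.det)
    (T : (Fin 2 → ZMod N) → ℕ)
    (hT : ∀ ξ, T ξ = Set.ncard {Q | ∃ k : ℕ, Q = (B ^ k).mulVec ξ})
    (lam : (Fin 2 → ZMod N) → ℕ → ℂ)
    (hlam : ∀ ξ j, lam ξ j =
      e ((N : ℝ) / T ξ *
          ∑ n ∈ Finset.Icc 1 (T ξ), g (fun i => (((B ^ n).mulVec ξ i).val : ℝ) / N)
        + (j : ℝ) / T ξ))
    (ξ η : Fin 2 → ZMod N) (j k : ℕ)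
    (hj1 : 1 ≤ j) (hjT : j ≤ T ξ) (hk1 : 1 ≤ k) (hkT : k ≤ T η)
    (heq : lam ξ j = lam η k) :
    {Q | ∃ m : ℕ, Q = (B ^ m).mulVec ξ} = {Q | ∃ m : ℕ, Q = (B ^ m).mulVec η} ∧ j = k := by
  clear hper
  obtain ⟨d, hd, hBd⟩ := exists_pow_one hB
  obtain ⟨tξ, htξ0, htξfix, htξcard, htξinj⟩ := orbit_stuff hd hBd ξ
  obtain ⟨tη, htη0, htηfix, htηcard, htηinj⟩ := orbit_stuff hd hBd η
  have hTξ : T ξ = tξ := by rw [hT]; exact htξcard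
  have hTη : T η = tη := by rw [hT]; exact htηcard
  have hTξ0 : 0 < T ξ := by omega
  have hTη0 : 0 < T η := by omega
  have hTξR : ((T ξ : ℝ)) ≠ 0 := by positivity
  have hTηR : ((T η : ℝ)) ≠ 0 := by positivity
  have hNR : ((N : ℝ)) ≠ 0 := by positivity
  -- notation for the summands
  set Fξ : ℕ → ℝ := fun n => g (fun i => (((B ^ n).mulVec ξ i).val : ℝ) / N) with hFξdef
  set Fη : ℕ → ℝ := fun n => g (fun i => (((B ^ n).mulVec η i).val : ℝ) / N) with hFηdef
  have hFξper : ∀ n, Fξ (n + T ξ) = Fξ n := by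
    intro n
    have : (B ^ (n + T ξ)).mulVec ξ = (B ^ n).mulVec ξ := by
      rw [hTξ, pow_add, ← Matrix.mulVec_mulVec, htξfix]
    simp only [hFξdef, this]
  have hFηper : ∀ n, Fη (n + T η) = Fη n := by
    intro n
    have : (B ^ (n + T η)).mulVec η = (B ^ n).mulVec η := by
      rw [hTη, pow_add, ← Matrix.mulVec_mulVec, htηfix]
    simp only [hFηdef, this]
  -- the eigenvalue relation
  rw [hlam ξ j, hlam η k] at heq
  obtain ⟨z, hz⟩ := e_eq_imp heq
  have hfoldξ : (∑ n ∈ Finset.Icc 1 (T ξ), g fun i => (((B ^ n).mulVec ξ i).val : ℝ) / N)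
      = ∑ n ∈ Finset.Icc 1 (T ξ), Fξ n := rfl
  have hfoldη : (∑ n ∈ Finset.Icc 1 (T η), g fun i => (((B ^ n).mulVec η i).val : ℝ) / N)
      = ∑ n ∈ Finset.Icc 1 (T η), Fη n := rfl
  rw [hfoldξ, hfoldη] at hz
  by_cases horb : {Q | ∃ m : ℕ, Q = (B ^ m).mulVec ξ} = {Q | ∃ m : ℕ, Q = (B ^ m).mulVec η}
  · -- same orbit: show j = k
    refine ⟨horb, ?_⟩
    have hTeq : T η = T ξ := by rw [hT ξ, hT η, horb]
    obtain ⟨s₀, hs₀⟩ : ∃ s₀ : ℕ, η = (B ^ s₀).mulVec ξ := by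
      have hηmem : η ∈ {Q | ∃ m : ℕ, Q = (B ^ m).mulVec η} :=
        ⟨0, by rw [pow_zero, Matrix.one_mulVec]⟩
      rw [← horb] at hηmem
      exact hηmem
    have hpoint : ∀ n : ℕ, (B ^ n).mulVec η = (B ^ (n + s₀)).mulVec ξ := by
      intro n
      rw [hs₀, Matrix.mulVec_mulVec, ← pow_add]
    have hFshift : ∀ n, Fη n = Fξ (n + s₀) := by
      intro n
      simp only [hFηdef, hFξdef, hpoint n]
    have hsum : ∑ n ∈ Finset.Icc 1 (T η), Fη n = ∑ n ∈ Finset.Icc 1 (T ξ), Fξ n := by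
      rw [hTeq]
      calc ∑ n ∈ Finset.Icc 1 (T ξ), Fη n = ∑ n ∈ Finset.Icc 1 (T ξ), Fξ (n + s₀) := by
            exact Finset.sum_congr rfl fun n _ => hFshift n
        _ = ∑ i ∈ Finset.range (T ξ), Fξ (i + 1 + s₀) := by
            rw [sum_Icc_one (T ξ) (fun n => Fξ (n + s₀))]
        _ = ∑ i ∈ Finset.range (T ξ), Fξ (i + (1 + s₀)) := by
            exact Finset.sum_congr rfl fun i _ => by rw [Nat.add_assoc]
        _ = ∑ i ∈ Finset.range (T ξ), Fξ i := sum_shift _ _ hFξper _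
        _ = ∑ i ∈ Finset.range (T ξ), Fξ (i + 1) := (sum_shift _ _ hFξper 1).symm
        _ = ∑ n ∈ Finset.Icc 1 (T ξ), Fξ n := (sum_Icc_one _ _).symm
    rw [hsum, hTeq] at hz
    have hR : (j : ℝ) - k = z * T ξ := by
      have h1 : ((j : ℝ) - k) / T ξ = z := by
        rw [← hz]; ring
      calc (j : ℝ) - k = ((j : ℝ) - k) / T ξ * T ξ := by field_simp
        _ = z * T ξ := by rw [h1]
    have hZ : (j : ℤ) - k = z * (T ξ : ℤ) := by exact_mod_cast hR
    have hjZ : (1 : ℤ) ≤ j := by exact_mod_cast hj1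
    have hjTZ : (j : ℤ) ≤ T ξ := by exact_mod_cast hjT
    have hkZ : (1 : ℤ) ≤ k := by exact_mod_cast hk1
    have hkTZ : (k : ℤ) ≤ T ξ := by
      have : (k : ℤ) ≤ T η := by exact_mod_cast hkT
      rw [hTeq] at this; exact this
    have hTZ : (1 : ℤ) ≤ (T ξ : ℤ) := by exact_mod_cast hTξ0
    have hz0 : z = 0 := by
      by_contra h0
      rcases lt_or_gt_of_ne h0 with h1 | h1
      · have h2 : z ≤ -1 := by omega
        have h3 : z * (T ξ : ℤ) ≤ -1 * (T ξ : ℤ) :=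
          mul_le_mul_of_nonneg_right h2 (by omega)
        linarith
      · have h2 : 1 ≤ z := by omega
        have h3 : 1 * (T ξ : ℤ) ≤ z * (T ξ : ℤ) :=
          mul_le_mul_of_nonneg_right h2 (by omega)
        linarith
    rw [hz0] at hZ
    omega
  · -- different orbits: derive a contradiction via hg
    exfalso
    classical
    -- vectors attached to indices
    set w : Fin (T ξ + T η) → (Fin 2 → ZMod N) :=
      Fin.append (fun i : Fin (T ξ) => (B ^ ((i : ℕ) + 1)).mulVec ξ)
        (fun i : Fin (T η) => (B ^ ((i : ℕ) + 1)).mulVec η) with hwdef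
    set x : Fin (T ξ + T η) → (Fin 2 → ℝ) :=
      fun i => fun l => ((w i l).val : ℝ) / N with hxdef
    set y : Fin (T ξ + T η) → ℤ :=
      Fin.append (fun _ : Fin (T ξ) => ((N : ℤ) * T η))
        (fun _ : Fin (T η) => -((N : ℤ) * T ξ)) with hydef
    have hyleft : ∀ i : Fin (T ξ), y (Fin.castAdd (T η) i) = (N : ℤ) * T η := by
      intro i; simp only [hydef, Fin.append_left]
    have hyright : ∀ i : Fin (T η), y (Fin.natAdd (T ξ) i) = -((N : ℤ) * T ξ) := by
      intro i; simp only [hydef, Fin.append_right]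
    have hwleft : ∀ i : Fin (T ξ), w (Fin.castAdd (T η) i) = (B ^ ((i : ℕ) + 1)).mulVec ξ := by
      intro i; simp only [hwdef, Fin.append_left]
    have hwright : ∀ i : Fin (T η), w (Fin.natAdd (T ξ) i) = (B ^ ((i : ℕ) + 1)).mulVec η := by
      intro i; simp only [hwdef, Fin.append_right]
    -- y ≠ 0
    have hy0 : y ≠ 0 := by
      intro hcon
      have h0 := congrFun hcon (Fin.castAdd (T η) ⟨0, hTξ0⟩)
      rw [hyleft ⟨0, hTξ0⟩] at h0
      simp only [Pi.zero_apply] at h0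
      have : (N : ℤ) * T η ≠ 0 := by positivity
      exact this h0
    -- rationality
    have hx1 : ∀ i l, ∃ q : ℚ, x i l = (q : ℝ) := by
      intro i l
      refine ⟨((w i l).val : ℚ) / N, ?_⟩
      simp only [hxdef]
      push_cast
      ring
    -- distinctness
    have hx2 : ∀ i i', i ≠ i' → ¬ ∀ l, ∃ kk : ℤ, x i l - x i' l = (kk : ℝ) := by
      intro i i' hne hall
      have hww : w i = w i' := by
        apply point_inj
        intro l
        exact hall l
      -- case analysis on i and i'
      have hrep : ∀ a : Fin (T ξ + T η),
          (∃ b : Fin (T ξ), a = Fin.castAdd (T η) b) ∨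
          (∃ b : Fin (T η), a = Fin.natAdd (T ξ) b) := by
        intro a
        refine Fin.addCases ?_ ?_ a
        · intro b; exact Or.inl ⟨b, rfl⟩
        · intro b; exact Or.inr ⟨b, rfl⟩
      rcases hrep i with ⟨a, rfl⟩ | ⟨a, rfl⟩ <;> rcases hrep i' with ⟨b, rfl⟩ | ⟨b, rfl⟩
      · rw [hwleft a, hwleft b] at hww
        have := htξinj ((a : ℕ) + 1) ((b : ℕ) + 1) (by omega)
          (by have := a.isLt; omega) (by omega) (by have := b.isLt; omega) hww
        apply hne
        have : (a : ℕ) = b := by omega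
        simp only [Fin.ext_iff, Fin.coe_castAdd]
        exact this
      · rw [hwleft a, hwright b] at hww
        exact horb (orbit_eq_of_meet hd hBd hww)
      · rw [hwright a, hwleft b] at hww
        exact horb (orbit_eq_of_meet hd hBd hww.symm)
      · rw [hwright a, hwright b] at hww
        have := htηinj ((a : ℕ) + 1) ((b : ℕ) + 1) (by omega)
          (by have := a.isLt; omega) (by omega) (by have := b.isLt; omega) hww
        apply hne
        have : (a : ℕ) = b := by omega
        simp only [Fin.ext_iff, Fin.coe_natAdd]
        omega
    -- the rational value
    set q : ℚ := (((k : ℤ) * T ξ + z * T ξ * T η - (j : ℤ) * T η : ℤ) : ℚ) with hqdef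
    -- the sum computation
    have hsum : ∑ i, (y i : ℝ) * g (x i) =
        (N : ℝ) * T η * (∑ n ∈ Finset.Icc 1 (T ξ), Fξ n)
          - (N : ℝ) * T ξ * (∑ n ∈ Finset.Icc 1 (T η), Fη n) := by
      rw [Fin.sum_univ_add]
      have hL : ∀ i : Fin (T ξ),
          (y (Fin.castAdd (T η) i) : ℝ) * g (x (Fin.castAdd (T η) i))
            = (N : ℝ) * T η * Fξ ((i : ℕ) + 1) := by
        intro i
        rw [hyleft i]
        have hxi : x (Fin.castAdd (T η) i)
            = fun l => ((((B ^ ((i : ℕ) + 1)).mulVec ξ) l).val : ℝ) / N := by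
          funext l
          simp only [hxdef, hwleft i]
        rw [hxi]
        push_cast
        rfl
      have hR : ∀ i : Fin (T η),
          (y (Fin.natAdd (T ξ) i) : ℝ) * g (x (Fin.natAdd (T ξ) i))
            = -((N : ℝ) * T ξ) * Fη ((i : ℕ) + 1) := by
        intro i
        rw [hyright i]
        have hxi : x (Fin.natAdd (T ξ) i)
            = fun l => ((((B ^ ((i : ℕ) + 1)).mulVec η) l).val : ℝ) / N := by
          funext l
          simp only [hxdef, hwright i]
        rw [hxi]
        push_cast
        rfl
      rw [Finset.sum_congr rfl (fun i _ => hL i), Finset.sum_congr rfl (fun i _ => hR i)]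
      rw [← Finset.mul_sum, ← Finset.mul_sum]
      rw [Fin.sum_univ_eq_sum_range (fun i => Fξ (i + 1)),
        Fin.sum_univ_eq_sum_range (fun i => Fη (i + 1))]
      rw [← sum_Icc_one (T ξ) Fξ, ← sum_Icc_one (T η) Fη]
      ring
    -- the key identity from hz
    have hkey : (N : ℝ) * T η * (∑ n ∈ Finset.Icc 1 (T ξ), Fξ n)
          - (N : ℝ) * T ξ * (∑ n ∈ Finset.Icc 1 (T η), Fη n) = (q : ℝ) := by
      have hz' : (N : ℝ) / T ξ * (∑ n ∈ Finset.Icc 1 (T ξ), Fξ n) + (j : ℝ) / T ξ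
          - ((N : ℝ) / T η * (∑ n ∈ Finset.Icc 1 (T η), Fη n) + (k : ℝ) / T η) = z := hz
      have hq' : (q : ℝ) = (k : ℝ) * T ξ + (z : ℝ) * T ξ * T η - (j : ℝ) * T η := by
        rw [hqdef]; push_cast; ring
      rw [hq']
      field_simp at hz'
      nlinarith [hz', sq_nonneg ((T ξ : ℝ) * T η)]
    exact hg (T ξ + T η) (by omega) y hy0 x hx1 hx2 q (by rw [hsum, hkey])
end

section
/- Let g : 𝕋² → ℝ satisfy: for every n ≥ 1, nonzero y ∈ ℤⁿ, distinct rational points x₁,…,xₙ ∈ ℚ²/ℤ², and z ∈ ℚ, Σ_j y_j·g(x_j) ≠ z. Let N ≥ 1 and B ∈ GL(2, ℤ/Nℤ), and define U on L²((ℤ/Nℤ)²) by (Uψ)(Q) = exp(2πi·N·g(Q/N))·ψ(BQ), where Q/N ∈ ℚ²/ℤ² is the rational point determined by Q. Then U has simple spectrum: all N² eigenvalues of U are distinct, i.e., every eigenspace of U is one-dimensional. -/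
open scoped BigOperators

lemma e_ne_zero (x : ℝ) : e x ≠ 0 := Complex.exp_ne_zero _

lemma e_sum {α : Type*} (s : Finset α) (f : α → ℝ) :
    e (∑ i ∈ s, f i) = ∏ i ∈ s, e (f i) := by
  simp only [e, ← Complex.exp_sum, ← Finset.mul_sum]
  norm_cast

lemma e_eq_e {a b : ℝ} (h : e a = e b) : ∃ k : ℤ, a - b = (k : ℝ) := by
  rw [e, e, Complex.exp_eq_exp_iff_exists_int] at h
  obtain ⟨n, hn⟩ := h
  refine ⟨n, ?_⟩
  have h2 : (2 * Real.pi * Complex.I) ≠ 0 := by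
    simp [Real.pi_ne_zero, Complex.I_ne_zero]
  have h1 : (2 * Real.pi * Complex.I) * a = (2 * Real.pi * Complex.I) * (b + n) := by
    rw [hn]; ring
  have h3 : (a : ℂ) = (b + n : ℝ) := by
    have := mul_left_cancel₀ h2 h1
    push_cast at this ⊢
    exact this
  have h4 : a = b + n := by exact_mod_cast h3
  rw [h4]; ring

set_option maxHeartbeats 1000000 in
/-- if `g : 𝕋² → ℝ` takes no rational value on nontrivial integer combinations
of distinct rational points, then the quantum propagator
`(Uψ)(Q) = exp(2πi N g(Q/N)) ψ(BQ)` on `L²((ℤ/Nℤ)²)` has simple spectrum: every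
eigenspace is one-dimensional. -/
theorem stmt10 (g : (Fin 2 → ℝ) → ℝ)
    (hper : ∀ v m : Fin 2 → ℝ, (∀ i, ∃ k : ℤ, m i = (k : ℝ)) → g (v + m) = g v)
    (hg : ∀ n : ℕ, 1 ≤ n → ∀ y : Fin n → ℤ, y ≠ 0 →
      ∀ x : Fin n → (Fin 2 → ℝ), (∀ i l, ∃ q : ℚ, x i l = (q : ℝ)) →
        (∀ i j, i ≠ j → ¬ ∀ l, ∃ k : ℤ, x i l - x j l = (k : ℝ)) →
      ∀ z : ℚ, ∑ i, (y i : ℝ) * g (x i) ≠ (z : ℝ))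
    (N : ℕ) [NeZero N] (hN : 1 ≤ N)
    (B : Matrix (Fin 2) (Fin 2) (ZMod N)) (hB : IsUnit B.det)
    (U : ((Fin 2 → ZMod N) → ℂ) → ((Fin 2 → ZMod N) → ℂ))
    (hU : ∀ ψ Q, U ψ Q =
      e ((N : ℝ) * g (fun i => ((Q i).val : ℝ) / N)) * ψ (B.mulVec Q)) :
    ∀ (μ : ℂ) (ψ φ : (Fin 2 → ZMod N) → ℂ), ψ ≠ 0 → φ ≠ 0 →
      U ψ = μ • ψ → U φ = μ • φ → ∃ c : ℂ, φ = c • ψ := by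
  classical
  intro μ ψ φ hψ0 hφ0 hψe hφe
  -- the permutation Q ↦ B Q
  have hsurj : Function.Surjective B.mulVec :=
    Matrix.mulVec_surjective_iff_isUnit.mpr ((Matrix.isUnit_iff_isUnit_det B).mpr hB)
  have hbij : Function.Bijective B.mulVec := Finite.surjective_iff_bijective.mp hsurj
  set σ : Equiv.Perm (Fin 2 → ZMod N) := Equiv.ofBijective _ hbij with hσdef
  set u : (Fin 2 → ZMod N) → (Fin 2 → ℝ) := fun Q i => ((Q i).val : ℝ) / N with hu
  set w : (Fin 2 → ZMod N) → ℂ := fun Q => e ((N : ℝ) * g (u Q)) with hw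
  have hw0 : ∀ Q, w Q ≠ 0 := fun Q => e_ne_zero _
  have hrel : ∀ (χ : (Fin 2 → ZMod N) → ℂ), U χ = μ • χ →
      ∀ Q, w Q * χ (σ Q) = μ * χ Q := by
    intro χ hχ Q
    have h2 := congrFun hχ Q
    rw [hU] at h2
    exact h2
  have iter : ∀ (χ : (Fin 2 → ZMod N) → ℂ), U χ = μ • χ → ∀ (n : ℕ) Q,
      (∏ k ∈ Finset.range n, w ((σ ^ k) Q)) * χ ((σ ^ n) Q) = μ ^ n * χ Q := by
    intro χ hχ n Q
    induction n with
    | zero => simp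
    | succ n ih =>
      have h1 : (σ ^ (n + 1)) Q = σ ((σ ^ n) Q) := by
        rw [pow_succ']; rfl
      rw [Finset.prod_range_succ, h1]
      calc (∏ k ∈ Finset.range n, w ((σ ^ k) Q)) * w ((σ ^ n) Q) * χ (σ ((σ ^ n) Q))
          = (∏ k ∈ Finset.range n, w ((σ ^ k) Q)) * (w ((σ ^ n) Q) * χ (σ ((σ ^ n) Q))) := by
            ring
        _ = (∏ k ∈ Finset.range n, w ((σ ^ k) Q)) * (μ * χ ((σ ^ n) Q)) := by
            rw [hrel χ hχ]
        _ = μ * ((∏ k ∈ Finset.range n, w ((σ ^ k) Q)) * χ ((σ ^ n) Q)) := by ring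
        _ = μ * (μ ^ n * χ Q) := by rw [ih]
        _ = μ ^ (n + 1) * χ Q := by ring
  set m := orderOf σ with hmdef
  have hm1 : σ ^ m = 1 := pow_orderOf_eq_one σ
  have hmpos : 0 < m := orderOf_pos σ
  have hsymm : ∀ (a : ℕ) (x y : Fin 2 → ZMod N), (σ ^ a) x = y → ∃ b : ℕ, (σ ^ b) y = x := by
    intro a x y hxy
    refine ⟨a * (m - 1), ?_⟩
    rw [← hxy, ← Equiv.Perm.mul_apply, ← pow_add]
    have hme : a * (m - 1) + a = m * a := by
      have h1 : m - 1 + 1 = m := Nat.succ_pred_eq_of_pos hmpos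
      calc a * (m - 1) + a = a * ((m - 1) + 1) := by ring
        _ = a * m := by rw [h1]
        _ = m * a := by ring
    rw [hme, pow_mul, hm1, one_pow]
    rfl
  have eig_pow : ∀ (χ : (Fin 2 → ZMod N) → ℂ), U χ = μ • χ → ∀ Q, χ Q ≠ 0 →
      μ ^ m = e ((N : ℝ) * ∑ k ∈ Finset.range m, g (u ((σ ^ k) Q))) := by
    intro χ hχ Q hQ
    have h1 := iter χ hχ m Q
    rw [hm1] at h1
    simp only [Equiv.Perm.one_apply] at h1
    have h2 : (∏ k ∈ Finset.range m, w ((σ ^ k) Q)) = μ ^ m := mul_right_cancel₀ hQ h1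
    rw [← h2, Finset.mul_sum, e_sum]
  -- key: two nonvanishing points of eigenfunctions with the same eigenvalue lie on one orbit
  have key : ∀ (χ₁ χ₂ : (Fin 2 → ZMod N) → ℂ), U χ₁ = μ • χ₁ → U χ₂ = μ • χ₂ →
      ∀ Q Q', χ₁ Q ≠ 0 → χ₂ Q' ≠ 0 → ∃ n : ℕ, (σ ^ n) Q = Q' := by
    intro χ₁ χ₂ h₁ h₂ Q Q' hQ hQ'
    by_contra hno
    push_neg at hno
    set S1 : Finset (Fin 2 → ZMod N) := (Finset.range m).image (fun k => (σ ^ k) Q) with hS1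
    set S2 : Finset (Fin 2 → ZMod N) := (Finset.range m).image (fun k => (σ ^ k) Q') with hS2
    have hdisj : ∀ v, v ∈ S1 → v ∉ S2 := by
      intro v hv1 hv2
      rw [hS1, Finset.mem_image] at hv1
      rw [hS2, Finset.mem_image] at hv2
      obtain ⟨a, -, ha⟩ := hv1
      obtain ⟨b, -, hb⟩ := hv2
      obtain ⟨c, hc⟩ := hsymm b Q' v hb
      exact hno (c + a) (by rw [pow_add, Equiv.Perm.mul_apply, ha, hc])
    set S : Finset (Fin 2 → ZMod N) := S1 ∪ S2 with hS
    have hQS1 : Q ∈ S1 := by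
      rw [hS1, Finset.mem_image]
      exact ⟨0, Finset.mem_range.mpr hmpos, by simp⟩
    have hQ'S2 : Q' ∈ S2 := by
      rw [hS2, Finset.mem_image]
      exact ⟨0, Finset.mem_range.mpr hmpos, by simp⟩
    set c1 : (Fin 2 → ZMod N) → ℕ :=
      fun v => ((Finset.range m).filter (fun k => (σ ^ k) Q = v)).card with hc1def
    set c2 : (Fin 2 → ZMod N) → ℕ :=
      fun v => ((Finset.range m).filter (fun k => (σ ^ k) Q' = v)).card with hc2def
    have hc1zero : ∀ v, v ∉ S1 → c1 v = 0 := by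
      intro v hv
      rw [hc1def]
      simp only [Finset.card_eq_zero, Finset.filter_eq_empty_iff]
      intro k hk hkv
      exact hv (by rw [hS1, Finset.mem_image]; exact ⟨k, hk, hkv⟩)
    have hc2zero : ∀ v, v ∉ S2 → c2 v = 0 := by
      intro v hv
      rw [hc2def]
      simp only [Finset.card_eq_zero, Finset.filter_eq_empty_iff]
      intro k hk hkv
      exact hv (by rw [hS2, Finset.mem_image]; exact ⟨k, hk, hkv⟩)
    have hsum1 : ∑ k ∈ Finset.range m, g (u ((σ ^ k) Q))
        = ∑ v ∈ S, (c1 v : ℝ) * g (u v) := by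
      have hsub : ∑ v ∈ S, (c1 v : ℝ) * g (u v) = ∑ v ∈ S1, (c1 v : ℝ) * g (u v) :=
        (Finset.sum_subset Finset.subset_union_left
          (fun v _ hv => by rw [hc1zero v hv]; simp)).symm
      rw [hsub, Finset.sum_comp (fun v => g (u v)) (fun k => (σ ^ k) Q)]
      exact Finset.sum_congr rfl fun v _ => by rw [nsmul_eq_mul]
    have hsum2 : ∑ k ∈ Finset.range m, g (u ((σ ^ k) Q'))
        = ∑ v ∈ S, (c2 v : ℝ) * g (u v) := by
      have hsub : ∑ v ∈ S, (c2 v : ℝ) * g (u v) = ∑ v ∈ S2, (c2 v : ℝ) * g (u v) :=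
        (Finset.sum_subset Finset.subset_union_right
          (fun v _ hv => by rw [hc2zero v hv]; simp)).symm
      rw [hsub, Finset.sum_comp (fun v => g (u v)) (fun k => (σ ^ k) Q')]
      exact Finset.sum_congr rfl fun v _ => by rw [nsmul_eq_mul]
    have hEE : e ((N : ℝ) * ∑ k ∈ Finset.range m, g (u ((σ ^ k) Q)))
        = e ((N : ℝ) * ∑ k ∈ Finset.range m, g (u ((σ ^ k) Q'))) :=
      (eig_pow χ₁ h₁ Q hQ).symm.trans (eig_pow χ₂ h₂ Q' hQ')
    obtain ⟨K, hK⟩ := e_eq_e hEE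
    rw [hsum1, hsum2] at hK
    have hn : 1 ≤ S.card :=
      Finset.card_pos.mpr ⟨Q, Finset.mem_union_left _ hQS1⟩
    have hQnotS2 : Q ∉ S2 := hdisj Q hQS1
    refine hg S.card hn
      (fun i => (N : ℤ) * c1 (S.equivFin.symm i : Fin 2 → ZMod N)
        - (N : ℤ) * c2 (S.equivFin.symm i : Fin 2 → ZMod N)) ?_
      (fun i => u (S.equivFin.symm i : Fin 2 → ZMod N)) ?_ ?_ K ?_
    · -- y ≠ 0
      intro h0
      have h1 := congrFun h0 (S.equivFin ⟨Q, Finset.mem_union_left _ hQS1⟩)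
      rw [Equiv.symm_apply_apply] at h1
      simp only [Pi.zero_apply] at h1
      rw [hc2zero Q hQnotS2] at h1
      have hc1Q : 1 ≤ c1 Q := by
        rw [hc1def]
        refine Finset.card_pos.mpr ⟨0, ?_⟩
        simp [Finset.mem_filter, Finset.mem_range, hmpos]
      have hN1 : (1 : ℤ) ≤ (N : ℤ) := by exact_mod_cast hN
      have hc1Q' : (1 : ℤ) ≤ (c1 Q : ℤ) := by exact_mod_cast hc1Q
      push_cast at h1
      nlinarith [h1, hN1, hc1Q']
    · -- rationality
      intro i l
      exact ⟨((((S.equivFin.symm i : Fin 2 → ZMod N)) l).val : ℚ) / (N : ℚ), by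
        rw [hu]; push_cast; ring⟩
    · -- distinctness mod ℤ
      intro i j hij hall
      have hvne : (S.equivFin.symm i : Fin 2 → ZMod N) ≠ (S.equivFin.symm j : Fin 2 → ZMod N) := by
        intro hcontra
        exact hij (S.equivFin.symm.injective (Subtype.ext hcontra))
      obtain ⟨l, hl⟩ := Function.ne_iff.mp hvne
      obtain ⟨k, hk⟩ := hall l
      set a := ((S.equivFin.symm i : Fin 2 → ZMod N) l).val with hadef
      set b := ((S.equivFin.symm j : Fin 2 → ZMod N) l).val with hbdef
      have hNR : (N : ℝ) ≠ 0 := by positivity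
      have hk2 : (a : ℝ) / N - (b : ℝ) / N = k := hk
      have hk' : (a : ℝ) - b = k * N := by
        field_simp at hk2
        linarith [hk2]
      have hkZ : (a : ℤ) - b = k * N := by exact_mod_cast hk'
      have haN : a < N := ZMod.val_lt _
      have hbN : b < N := ZMod.val_lt _
      have hk0 : k = 0 := by
        have h1 : (a : ℤ) < N := by exact_mod_cast haN
        have h2 : (b : ℤ) < N := by exact_mod_cast hbN
        have h3 : (0 : ℤ) ≤ a := Int.ofNat_nonneg a
        have h4 : (0 : ℤ) ≤ b := Int.ofNat_nonneg b
        have h5 : (1 : ℤ) ≤ N := by exact_mod_cast hN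
        nlinarith [hkZ]
      rw [hk0, zero_mul] at hkZ
      have hab : a = b := by omega
      exact hl (ZMod.val_injective N hab)
    · -- the sum equals K
      calc ∑ i, ((((N : ℤ) * c1 (S.equivFin.symm i : Fin 2 → ZMod N)
              - (N : ℤ) * c2 (S.equivFin.symm i : Fin 2 → ZMod N)) : ℤ) : ℝ)
              * g (u (S.equivFin.symm i : Fin 2 → ZMod N))
          = ∑ a : S, (((N : ℤ) * c1 (a : Fin 2 → ZMod N)
              - (N : ℤ) * c2 (a : Fin 2 → ZMod N) : ℤ) : ℝ) * g (u (a : Fin 2 → ZMod N)) :=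
            Equiv.sum_comp S.equivFin.symm (fun a => (((N : ℤ) * c1 (a : Fin 2 → ZMod N)
              - (N : ℤ) * c2 (a : Fin 2 → ZMod N) : ℤ) : ℝ) * g (u (a : Fin 2 → ZMod N)))
        _ = ∑ v ∈ S, (((N : ℤ) * c1 v - (N : ℤ) * c2 v : ℤ) : ℝ) * g (u v) :=
            Finset.sum_coe_sort S (fun v => (((N : ℤ) * c1 v - (N : ℤ) * c2 v : ℤ) : ℝ) * g (u v))
        _ = (N : ℝ) * (∑ v ∈ S, (c1 v : ℝ) * g (u v))
            - (N : ℝ) * (∑ v ∈ S, (c2 v : ℝ) * g (u v)) := by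
            rw [Finset.mul_sum, Finset.mul_sum, ← Finset.sum_sub_distrib]
            refine Finset.sum_congr rfl fun v _ => by push_cast; ring
        _ = (K : ℝ) := hK
  -- assemble
  obtain ⟨Q0, hQ0⟩ := Function.ne_iff.mp hψ0
  simp only [Pi.zero_apply] at hQ0
  refine ⟨φ Q0 / ψ Q0, funext fun Q => ?_⟩
  simp only [Pi.smul_apply, smul_eq_mul]
  by_cases horb : ∃ n : ℕ, (σ ^ n) Q0 = Q
  · obtain ⟨n, rfl⟩ := horb
    have hP : (∏ k ∈ Finset.range n, w ((σ ^ k) Q0)) ≠ 0 :=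
      Finset.prod_ne_zero_iff.mpr fun k _ => hw0 _
    have h1 := iter φ hφe n Q0
    have h2 := iter ψ hψe n Q0
    apply mul_left_cancel₀ hP
    rw [h1]
    calc μ ^ n * φ Q0
        = (φ Q0 / ψ Q0) * (μ ^ n * ψ Q0) := by field_simp
      _ = (φ Q0 / ψ Q0) * ((∏ k ∈ Finset.range n, w ((σ ^ k) Q0)) * ψ ((σ ^ n) Q0)) := by
          rw [h2]
      _ = (∏ k ∈ Finset.range n, w ((σ ^ k) Q0)) * (φ Q0 / ψ Q0 * ψ ((σ ^ n) Q0)) := by ring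
  · have hψQ : ψ Q = 0 := by
      by_contra hne
      obtain ⟨n, hn⟩ := key ψ ψ hψe hψe Q Q0 hne hQ0
      obtain ⟨b, hb⟩ := hsymm n Q Q0 hn
      exact horb ⟨b, hb⟩
    have hφQ : φ Q = 0 := by
      by_contra hne
      obtain ⟨n, hn⟩ := key φ ψ hφe hψe Q Q0 hne hQ0
      obtain ⟨b, hb⟩ := hsymm n Q Q0 hn
      exact horb ⟨b, hb⟩
    rw [hψQ, hφQ, mul_zero]
end
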